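/- For every x ≥ 0, the second moment satisfies μ_2^{(α,β)}(x) = ((n x)^2 + (2α + 4) n x + (α+1)(α+2)) / (n − β)^2. -/

import Mathlib

open MeasureTheory Real Filter

/-- The Szász–Mirakyan basis functions `ψ_{n,k}(x) = e^{-nx} (nx)^k / k!`. -/
noncomputable def psi (n k : ℕ) (x : ℝ) : ℝ :=
  Real.exp (-(n * x)) * (n * x) ^ k / (Nat.factorial k)

/-- The Szász–Mirakyan–Laguerre–Durrmeyer operator `M_n^{(α,β)}`. -/
noncomputable def M (α β : ℝ) (n : ℕ) (f : ℝ → ℝ) (x : ℝ) : ℝ :=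
  ∑' k : ℕ, (((n : ℝ) - β) ^ ((k : ℝ) + α + 1) / Real.Gamma ((k : ℝ) + α + 1)) *
    (∫ t in Set.Ioi (0 : ℝ), f t * t ^ ((k : ℝ) + α) * Real.exp (-((n : ℝ) - β) * t)) *
    psi n k x

/-- The `r`-th moment `μ_r^{(α,β)}(x) = M_n^{(α,β)}[t ↦ t^r](x)`. -/
noncomputable def mu (α β : ℝ) (n : ℕ) (r : ℕ) (x : ℝ) : ℝ :=
  M α β n (fun t => t ^ r) x

/-- The second moment. -/
theorem stmt_2 (α β : ℝ) (hα : -1 < α) (n : ℕ) (hn : β < n) (x : ℝ) (hx : 0 ≤ x) :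
    mu α β n 2 x =
      (((n : ℝ) * x) ^ 2 + (2 * α + 4) * ((n : ℝ) * x) + (α + 1) * (α + 2)) /
        ((n : ℝ) - β) ^ 2 := by
  have hs : (0:ℝ) < (n:ℝ) - β := sub_pos.mpr hn
  set s : ℝ := (n:ℝ) - β with hsdef
  set y : ℝ := (n:ℝ) * x with hydef
  have hy : 0 ≤ y := mul_nonneg (Nat.cast_nonneg n) hx
  -- exp series
  have hA : Summable (fun k : ℕ => y ^ k / (Nat.factorial k : ℝ)) :=
    Real.summable_pow_div_factorial y
  have hAsum : (∑' k : ℕ, y ^ k / (Nat.factorial k : ℝ)) = Real.exp y := by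
    rw [Real.exp_eq_exp_ℝ, NormedSpace.exp_eq_tsum_div]
  have hg1 : ∀ k : ℕ, ((k+1 : ℕ) : ℝ) * y ^ (k+1) / (Nat.factorial (k+1) : ℝ)
      = y * (y ^ k / (Nat.factorial k : ℝ)) := by
    intro k
    rw [Nat.factorial_succ, pow_succ]
    push_cast
    have hk : ((k:ℝ)+1) ≠ 0 := by positivity
    field_simp
  have hB : Summable (fun k : ℕ => (k : ℝ) * y ^ k / (Nat.factorial k : ℝ)) := by
    rw [← summable_nat_add_iff 1]
    exact (hA.mul_left y).congr fun k => (hg1 k).symm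
  have hBsum : (∑' k : ℕ, (k : ℝ) * y ^ k / (Nat.factorial k : ℝ)) = y * Real.exp y := by
    rw [Summable.tsum_eq_zero_add hB]
    simp only [Nat.cast_zero, zero_mul, zero_div, zero_add]
    calc (∑' k : ℕ, ((k+1 : ℕ) : ℝ) * y ^ (k+1) / (Nat.factorial (k+1) : ℝ))
        = ∑' k : ℕ, y * (y ^ k / (Nat.factorial k : ℝ)) := by
          exact tsum_congr hg1
      _ = y * Real.exp y := by rw [tsum_mul_left, hAsum]
  have hg2 : ∀ k : ℕ, ((k+1 : ℕ) : ℝ) * (((k+1 : ℕ) : ℝ) - 1) * y ^ (k+1) / (Nat.factorial (k+1) : ℝ)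
      = y * ((k : ℝ) * y ^ k / (Nat.factorial k : ℝ)) := by
    intro k
    rw [Nat.factorial_succ, pow_succ]
    push_cast
    have hk : ((k:ℝ)+1) ≠ 0 := by positivity
    field_simp
    ring
  have hC : Summable (fun k : ℕ => (k : ℝ) * ((k : ℝ) - 1) * y ^ k / (Nat.factorial k : ℝ)) := by
    rw [← summable_nat_add_iff 1]
    exact (hB.mul_left y).congr fun k => (hg2 k).symm
  have hCsum : (∑' k : ℕ, (k : ℝ) * ((k : ℝ) - 1) * y ^ k / (Nat.factorial k : ℝ))
      = y ^ 2 * Real.exp y := by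
    rw [Summable.tsum_eq_zero_add hC]
    simp only [Nat.cast_zero, zero_mul, zero_div, zero_add]
    calc (∑' k : ℕ, ((k+1 : ℕ) : ℝ) * (((k+1 : ℕ) : ℝ) - 1) * y ^ (k+1) / (Nat.factorial (k+1) : ℝ))
        = ∑' k : ℕ, y * ((k : ℝ) * y ^ k / (Nat.factorial k : ℝ)) := tsum_congr hg2
      _ = y * (y * Real.exp y) := by rw [tsum_mul_left, hBsum]
      _ = y ^ 2 * Real.exp y := by ring
  -- termwise simplification of mu
  have hterm : ∀ k : ℕ,
      (s ^ ((k : ℝ) + α + 1) / Real.Gamma ((k : ℝ) + α + 1)) *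
        (∫ t in Set.Ioi (0 : ℝ), t ^ (2 : ℕ) * t ^ ((k : ℝ) + α) * Real.exp (-s * t)) *
        psi n k x
      = (((k : ℝ) + α + 1) * ((k : ℝ) + α + 2) / s ^ 2) * psi n k x := by
    intro k
    have ha1 : (0:ℝ) < (k : ℝ) + α + 1 := by
      have : (0:ℝ) ≤ (k:ℝ) := Nat.cast_nonneg k
      linarith
    have hint : (∫ t in Set.Ioi (0 : ℝ), t ^ (2 : ℕ) * t ^ ((k : ℝ) + α) * Real.exp (-s * t))
        = (1 / s) ^ ((k : ℝ) + α + 3) * Real.Gamma ((k : ℝ) + α + 3) := by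
      rw [← Real.integral_rpow_mul_exp_neg_mul_Ioi (by linarith : (0:ℝ) < (k:ℝ) + α + 3) hs]
      refine setIntegral_congr_fun measurableSet_Ioi (fun t ht => ?_)
      have ht0 : (0:ℝ) < t := ht
      have h3 : t ^ ((k:ℝ) + α + 3 - 1) = t ^ ((k:ℝ) + α) * t ^ (2:ℕ) := by
        rw [show ((k:ℝ) + α + 3 - 1) = ((k:ℝ) + α) + ((2:ℕ):ℝ) by push_cast; ring,
          Real.rpow_add ht0, Real.rpow_natCast]
      rw [h3, neg_mul]
      ring
    rw [hint]
    have hG3 : Real.Gamma ((k : ℝ) + α + 3)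
        = ((k : ℝ) + α + 2) * (((k : ℝ) + α + 1) * Real.Gamma ((k : ℝ) + α + 1)) := by
      have e1 : (k : ℝ) + α + 3 = ((k : ℝ) + α + 2) + 1 := by ring
      have e2 : (k : ℝ) + α + 2 = ((k : ℝ) + α + 1) + 1 := by ring
      rw [e1, Real.Gamma_add_one (by linarith), e2, Real.Gamma_add_one (by linarith)]
    have hGpos : 0 < Real.Gamma ((k : ℝ) + α + 1) := Real.Gamma_pos_of_pos ha1
    have hpow : s ^ ((k : ℝ) + α + 1) * (1 / s) ^ ((k : ℝ) + α + 3) = 1 / s ^ 2 := by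
      rw [one_div, Real.inv_rpow hs.le, ← Real.rpow_neg hs.le, ← Real.rpow_add hs,
        show ((k:ℝ) + α + 1 + -((k:ℝ) + α + 3)) = -((2:ℕ):ℝ) by push_cast; ring,
        Real.rpow_neg hs.le, Real.rpow_natCast, one_div]
    congr 1
    calc s ^ ((k : ℝ) + α + 1) / Real.Gamma ((k : ℝ) + α + 1) *
          ((1 / s) ^ ((k : ℝ) + α + 3) * Real.Gamma ((k : ℝ) + α + 3))
        = (s ^ ((k : ℝ) + α + 1) * (1 / s) ^ ((k : ℝ) + α + 3)) *
            (Real.Gamma ((k : ℝ) + α + 3) / Real.Gamma ((k : ℝ) + α + 1)) := by ring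
      _ = (1 / s ^ 2) * (((k : ℝ) + α + 2) * (((k : ℝ) + α + 1))) := by
          rw [hpow, hG3, mul_div_assoc, mul_div_assoc, div_self hGpos.ne', mul_one]
      _ = ((k : ℝ) + α + 1) * ((k : ℝ) + α + 2) / s ^ 2 := by ring
  -- put it together
  have hpsi : ∀ k : ℕ, psi n k x = Real.exp (-y) * (y ^ k / (Nat.factorial k : ℝ)) := by
    intro k
    simp [psi, hydef, mul_div_assoc]
  rw [mu, M]
  calc (∑' k : ℕ, (s ^ ((k : ℝ) + α + 1) / Real.Gamma ((k : ℝ) + α + 1)) *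
        (∫ t in Set.Ioi (0 : ℝ), t ^ (2 : ℕ) * t ^ ((k : ℝ) + α) * Real.exp (-s * t)) *
        psi n k x)
      = ∑' k : ℕ, (Real.exp (-y) / s ^ 2) *
          (((k : ℝ) * ((k : ℝ) - 1)) * y ^ k / (Nat.factorial k : ℝ)
            + (2 * α + 4) * ((k : ℝ) * y ^ k / (Nat.factorial k : ℝ))
            + ((α + 1) * (α + 2)) * (y ^ k / (Nat.factorial k : ℝ))) := by
        refine tsum_congr fun k => ?_
        rw [hterm k, hpsi k]
        have hf : (Nat.factorial k : ℝ) ≠ 0 := Nat.cast_ne_zero.mpr (Nat.factorial_ne_zero k)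
        field_simp
        ring
    _ = (Real.exp (-y) / s ^ 2) *
          ((y ^ 2 * Real.exp y) + ((2 * α + 4) * (y * Real.exp y))
            + ((α + 1) * (α + 2) * Real.exp y)) := by
        rw [tsum_mul_left]
        congr 1
        rw [Summable.tsum_add (hC.add ((hB.mul_left _))) (hA.mul_left _),
          Summable.tsum_add hC (hB.mul_left _), tsum_mul_left, tsum_mul_left, hAsum, hBsum, hCsum]
    _ = (y ^ 2 + (2 * α + 4) * y + (α + 1) * (α + 2)) / s ^ 2 := by
        have h1 : Real.exp (-y) * Real.exp y = 1 := by rw [← Real.exp_add]; simp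
        rw [div_mul_eq_mul_div]
        congr 1
        calc Real.exp (-y) * ((y ^ 2 * Real.exp y) + ((2 * α + 4) * (y * Real.exp y))
              + ((α + 1) * (α + 2) * Real.exp y))
            = (y ^ 2 + (2 * α + 4) * y + (α + 1) * (α + 2)) *
                (Real.exp (-y) * Real.exp y) := by ring
          _ = _ := by rw [h1, mul_one]
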